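/- With Q a finitely splitting lim-sup tree forcing, the union of finitely many elements of Q is again an element of Q. -/
import Mathlib


namespace Sacch

/-- The length-`n` initial segment of an infinite sequence, as a list. -/
def restr (b : ℕ → ℕ) (n : ℕ) : List ℕ := List.ofFn fun i : Fin n => b i

/-- A tree on ω: a set of finite sequences closed under initial segments. -/
def IsTree (T : Set (List ℕ)) : Prop :=
  ∀ s t : List ℕ, s <+: t → t ∈ T → s ∈ T

/-- The set of immediate successors of `t` in `T`. -/
def succs (T : Set (List ℕ)) (t : List ℕ) : Set (List ℕ) :=
  {s | s ∈ T ∧ ∃ k : ℕ, s = t ++ [k]}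

/-- `T` is finitely splitting: every node has finitely many immediate successors. -/
def FinSplit (T : Set (List ℕ)) : Prop :=
  ∀ t ∈ T, (succs T t).Finite

/-- `b` is a chain in `T`: a pairwise `≼`-comparable subset of `T`. -/
def IsChainIn (T b : Set (List ℕ)) : Prop :=
  b ⊆ T ∧ ∀ s ∈ b, ∀ t ∈ b, s <+: t ∨ t <+: s

/-- `b` is a branch of `T`: a maximal chain. -/
def IsBranch (T b : Set (List ℕ)) : Prop :=
  IsChainIn T b ∧ ∀ b', IsChainIn T b' → b ⊆ b' → b' = b

/-- `A` is an antichain: pairwise `≼`-incomparable. -/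
def IsAntichainIn (A : Set (List ℕ)) : Prop :=
  ∀ s ∈ A, ∀ t ∈ A, s ≠ t → ¬(s <+: t ∨ t <+: s)

/-- `F` is a front of `T`: an antichain in `T` meeting every branch of `T`. -/
def IsFront (T F : Set (List ℕ)) : Prop :=
  F ⊆ T ∧ IsAntichainIn F ∧ ∀ b, IsBranch T b → ∃ t ∈ b, t ∈ F

/-- The norm `μ_T(t)` of a node `t` in a subtree `T`: the `μ`-value of its
set of immediate `T`-successors. -/
noncomputable def normOf (μ : List ℕ → Set (List ℕ) → ℝ)
    (T : Set (List ℕ)) (t : List ℕ) : ℝ := μ t (succs T t)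

/-- Along the branch `b` of `T`, `limsup μ_T(b ↾ n) = ∞`. -/
def BranchLimsupInf (μ : List ℕ → Set (List ℕ) → ℝ)
    (T b : Set (List ℕ)) : Prop :=
  ∀ m : ℝ, ∀ N : ℕ, ∃ t ∈ b, N ≤ t.length ∧ m < normOf μ T t

/-- The standing assumptions on `(Tmax, μ)` making a finitely splitting
lim-sup tree forcing: `Tmax` is a nonempty finitely splitting tree, `μ`
assigns non-negative reals monotonically to sets of successors, singletons
have norm `< 1` and along every branch of `Tmax` the limsup of the norms
is infinite. -/
structure LimSupForcing (Tmax : Set (List ℕ))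
    (μ : List ℕ → Set (List ℕ) → ℝ) : Prop where
  tree : IsTree Tmax
  nonempty : Tmax.Nonempty
  finSplit : FinSplit Tmax
  mono : ∀ t : List ℕ, ∀ A B : Set (List ℕ), A ⊆ B → μ t A ≤ μ t B
  nonneg : ∀ t A, 0 ≤ μ t A
  singleton_lt_one : ∀ t s : List ℕ, μ t {s} < 1
  limsup : ∀ b, IsBranch Tmax b → BranchLimsupInf μ Tmax b

/-- `T ∈ Q`: `T` is a condition of the lim-sup tree forcing `Q = Q(Tmax, μ)`,
i.e. a nonempty subtree of `Tmax` along each of whose branches the limsup of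
the norms is infinite. -/
def memQ (Tmax : Set (List ℕ)) (μ : List ℕ → Set (List ℕ) → ℝ)
    (T : Set (List ℕ)) : Prop :=
  T.Nonempty ∧ T ⊆ Tmax ∧ IsTree T ∧
    ∀ b, IsBranch T b → BranchLimsupInf μ T b

/-- `T` is `n`-dense: there is a front of `T` all of whose nodes have
norm `> n`. -/
def nDense (μ : List ℕ → Set (List ℕ) → ℝ) (T : Set (List ℕ)) (n : ℕ) : Prop :=
  ∃ F, IsFront T F ∧ ∀ t ∈ F, (n : ℝ) < normOf μ T t

end Sacch


open Sacch

private lemma sacch_no_leaf {Tmax : Set (List ℕ)} {μ : List ℕ → Set (List ℕ) → ℝ}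
    {T : Set (List ℕ)} (hT : memQ Tmax μ T) {t : List ℕ} (ht : t ∈ T) :
    ∃ u ∈ T, t <+: u ∧ t.length < u.length := by
  obtain ⟨hne, hsub, htree, hbr⟩ := hT
  by_contra hcon
  push_neg at hcon
  have hC : IsBranch T {v | v <+: t} := by
    refine ⟨⟨fun v hv => htree v t hv ht, fun a ha c hc => List.prefix_or_prefix_of_prefix ha hc⟩, ?_⟩
    rintro b' ⟨hb'T, hb'chain⟩ hsub'
    refine Set.Subset.antisymm (fun u hu => ?_) hsub'
    rcases hb'chain u hu t (hsub' (List.prefix_refl t)) with h1 | h1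
    · exact h1
    · have hle := hcon u (hb'T hu) h1
      have : t = u := h1.eq_of_length_le hle
      exact this ▸ List.prefix_refl t
  obtain ⟨v, hv, hlen, _⟩ := hbr _ hC 0 (t.length + 1)
  have : v.length ≤ t.length := List.IsPrefix.length_le hv
  omega

open Sacch in
/-- The union of finitely many elements of `Q` is again an element of `Q`. -/
theorem memQ_finite_union (Tmax : Set (List ℕ)) (μ : List ℕ → Set (List ℕ) → ℝ)
    (h : LimSupForcing Tmax μ) {ι : Type} (s : Finset ι) (hs : s.Nonempty)
    (T : ι → Set (List ℕ)) (hT : ∀ i ∈ s, memQ Tmax μ (T i)) :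
    memQ Tmax μ (⋃ i ∈ s, T i) := by
  classical
  obtain ⟨i0, hi0⟩ := hs
  have hsubU : ∀ i ∈ s, T i ⊆ ⋃ i ∈ s, T i := fun i hi => Set.subset_biUnion_of_mem hi
  have hmemU : ∀ t ∈ ⋃ i ∈ s, T i, ∃ i ∈ s, t ∈ T i := by
    intro t ht; simpa using ht
  refine ⟨?_, ?_, ?_, ?_⟩
  · obtain ⟨t, ht⟩ := (hT i0 hi0).1
    exact ⟨t, hsubU i0 hi0 ht⟩
  · intro t ht
    obtain ⟨i, hi, hti⟩ := hmemU t ht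
    exact (hT i hi).2.1 hti
  · intro a c hac hc
    obtain ⟨i, hi, hci⟩ := hmemU c hc
    exact hsubU i hi ((hT i hi).2.2.1 a c hac hci)
  · intro b hb m N
    obtain ⟨⟨hbU, hbc⟩, hmax⟩ := hb
    -- lengths in b are unbounded
    have hunb : ∀ M : ℕ, ∃ t ∈ b, M ≤ t.length := by
      intro M
      by_contra hcon
      push_neg at hcon
      rcases Set.eq_empty_or_nonempty b with hbe | ⟨t0, ht0⟩
      · obtain ⟨t, ht⟩ := (hT i0 hi0).1
        have hch : IsChainIn (⋃ i ∈ s, T i) {t} := by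
          refine ⟨?_, ?_⟩
          · intro a ha; rw [Set.mem_singleton_iff] at ha; exact ha ▸ hsubU i0 hi0 ht
          · intro a ha c hc
            rw [Set.mem_singleton_iff] at ha hc
            rw [ha, hc]
            exact Or.inl (List.prefix_refl t)
        have := hmax _ hch (hbe ▸ Set.empty_subset _)
        rw [hbe] at this
        exact absurd this (Set.singleton_ne_empty t)
      · set L : Set ℕ := {n | ∃ t ∈ b, t.length = n} with hL
        have hLne : L.Nonempty := ⟨t0.length, t0, ht0, rfl⟩
        have hLbdd : BddAbove L := ⟨M, by rintro n ⟨t, ht, rfl⟩; exact (hcon t ht).le⟩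
        obtain ⟨t, htb, htlen⟩ := Nat.sSup_mem hLne hLbdd
        have hmaxlen : ∀ v ∈ b, v.length ≤ t.length := by
          intro v hv
          rw [htlen]; exact le_csSup hLbdd ⟨v, hv, rfl⟩
        have hprefix : ∀ v ∈ b, v <+: t := by
          intro v hv
          rcases hbc v hv t htb with h1 | h1
          · exact h1
          · exact (h1.eq_of_length_le (hmaxlen v hv)) ▸ List.prefix_refl t
        obtain ⟨i, hi, hti⟩ := hmemU t (hbU htb)
        obtain ⟨u, huT, htu, hlt⟩ := sacch_no_leaf (hT i hi) hti
        have hchain : IsChainIn (⋃ i ∈ s, T i) (insert u b) := by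
          refine ⟨?_, ?_⟩
          · rintro v (rfl | hv)
            · exact hsubU i hi huT
            · exact hbU hv
          · rintro a (rfl | ha) c (rfl | hc)
            · exact Or.inl List.prefix_rfl
            · exact Or.inr ((hprefix c hc).trans htu)
            · exact Or.inl ((hprefix a ha).trans htu)
            · exact hbc a ha c hc
        have heq := hmax _ hchain (Set.subset_insert u b)
        have hub : u ∈ b := heq ▸ Set.mem_insert u b
        have := hmaxlen u hub
        omega
    -- pigeonhole: some i has cofinally many nodes of b
    have hpig : ∃ i ∈ s, ∀ M : ℕ, ∃ t ∈ b, t ∈ T i ∧ M ≤ t.length := by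
      by_contra hcon
      push_neg at hcon
      have hcon' : ∀ i : ι, ∃ M : ℕ, i ∈ s → ∀ t ∈ b, t ∈ T i → t.length < M := by
        intro i
        by_cases hi : i ∈ s
        · obtain ⟨M, hM⟩ := hcon i hi
          exact ⟨M, fun _ => hM⟩
        · exact ⟨0, fun hc => absurd hc hi⟩
      choose Mf hMf using hcon'
      obtain ⟨t, htb, htlen⟩ := hunb (s.sup Mf + 1)
      obtain ⟨i, hi, hti⟩ := hmemU t (hbU htb)
      have h1 := hMf i hi t htb hti
      have h2 := Finset.le_sup (f := Mf) hi
      omega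
    obtain ⟨i, hi, hcof⟩ := hpig
    have hbTi : b ⊆ T i := by
      intro u hu
      obtain ⟨t, htb, hti, htlen⟩ := hcof u.length
      rcases hbc u hu t htb with h1 | h1
      · exact (hT i hi).2.2.1 u t h1 hti
      · exact (h1.eq_of_length_le htlen) ▸ hti
    have hbranch : IsBranch (T i) b := by
      refine ⟨⟨hbTi, hbc⟩, fun b' hb' hsub' => hmax b' ⟨hb'.1.trans (hsubU i hi), hb'.2⟩ hsub'⟩
    obtain ⟨t, htb, htlen, htnorm⟩ := (hT i hi).2.2.2 b hbranch m N
    refine ⟨t, htb, htlen, lt_of_lt_of_le htnorm ?_⟩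
    apply h.mono
    intro u hu
    exact ⟨hsubU i hi hu.1, hu.2⟩
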